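/- For n = 5 and k = 3, the minimum of T(Q) over all complete sequences Q equals 65/16; this minimum is attained, for example, by the sequence obtained from the pattern shifting sequence ({0,1,2}, {1,2,3}, {2,3,4}, {0,1,3}, {1,2,4}, {0,1,4}, {0,2,3}, {1,3,4}, {0,2,4}, {0,3,4}) by swapping its second and tenth queries. -/

import Mathlib

/-- The set of scenes: subsets of `Fin n` with at least `k` elements. -/
def scenes (n k : ℕ) : Finset (Finset (Fin n)) :=
  Finset.univ.filter fun s => k ≤ s.card

/-- A complete sequence: a list of queries containing every `k`-element
subset of `Fin n` exactly once. -/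
def CompleteSeq (n k : ℕ) (Q : List (Finset (Fin n))) : Prop :=
  Q.Nodup ∧ ∀ q : Finset (Fin n), q ∈ Q ↔ q.card = k

/-- `tau n Q s` is the least (1-based) index `i` such that `q_i ⊆ s`. -/
def tau (n : ℕ) (Q : List (Finset (Fin n))) (s : Finset (Fin n)) : ℕ :=
  Q.findIdx (fun q => decide (q ⊆ s)) + 1

/-- The expected time to discovery `T(Q) = (1/|S|) Σ_{s∈S} τ(Q,s)`. -/
def T (n k : ℕ) (Q : List (Finset (Fin n))) : ℚ :=
  ((scenes n k).card : ℚ)⁻¹ * ∑ s ∈ scenes n k, (tau n Q s : ℚ)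

/-- `D n k Q i`: the number of scenes discovered by the query at (1-based)
position `i` of `Q` but not by any earlier query. -/
def D (n k : ℕ) (Q : List (Finset (Fin n))) (i : ℕ) : ℕ :=
  ((scenes n k).filter fun s =>
    Q.getD (i - 1) ∅ ⊆ s ∧ ∀ j < i - 1, ¬ Q.getD j ∅ ⊆ s).card

/-- The list obtained from `Q` by swapping the queries at (1-based)
positions `i` and `i+1`. -/
def swapAdj (n : ℕ) (Q : List (Finset (Fin n))) (i : ℕ) : List (Finset (Fin n)) :=
  (Q.set (i - 1) (Q.getD i ∅)).set i (Q.getD (i - 1) ∅)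

/-- The sequence obtained from the pattern shifting sequence for `n = 5`,
`k = 3` by swapping its second and tenth queries. -/
def swappedQ : List (Finset (Fin 5)) :=
  [{0, 1, 2}, {0, 3, 4}, {2, 3, 4}, {0, 1, 3}, {1, 2, 4},
   {0, 1, 4}, {0, 2, 3}, {1, 3, 4}, {0, 2, 4}, {1, 2, 3}]

lemma layer_cake {X : Type*} [DecidableEq X] (F : Finset X) (t : X → ℕ) (N : ℕ)
    (ht : ∀ s ∈ F, t s ≤ N) :
    ∑ s ∈ F, t s = ∑ m ∈ Finset.range N, (F.filter (fun s => m < t s)).card := by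
  have h1 : ∀ m, (F.filter (fun s => m < t s)).card
      = ∑ s ∈ F, if m < t s then 1 else 0 := fun m => Finset.card_filter _ _
  simp only [h1]
  rw [Finset.sum_comm]
  refine Finset.sum_congr rfl fun s hs => ?_
  have : ((Finset.range N).filter (fun m => m < t s)) = Finset.range (t s) := by
    ext m
    simp only [Finset.mem_filter, Finset.mem_range]
    exact ⟨fun h => h.2, fun h => ⟨lt_of_lt_of_le h (ht s hs), h⟩⟩
  rw [← Finset.card_filter, this, Finset.card_range]

lemma count_bound (Q : List (Finset (Fin 5))) (hlen : Q.length = 10)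
    (F : Finset (Finset (Fin 5))) (b : ℕ)
    (hb : ∀ i < 10, (F.filter (fun s => Q.getD i ∅ ⊆ s)).card ≤ b)
    (m : ℕ) (hm : m ≤ 10) :
    (F.filter (fun s => tau 5 Q s ≤ m)).card ≤ b * m := by
  have hsub : F.filter (fun s => tau 5 Q s ≤ m) ⊆
      (Finset.range m).biUnion (fun i => F.filter (fun s => Q.getD i ∅ ⊆ s)) := by
    intro s hs
    rw [Finset.mem_filter] at hs
    obtain ⟨hsF, hτ⟩ := hs
    have hj : Q.findIdx (fun q => decide (q ⊆ s)) < m := by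
      unfold tau at hτ; omega
    have hjlen : Q.findIdx (fun q => decide (q ⊆ s)) < Q.length := by omega
    have hp := List.findIdx_getElem (p := fun q => decide (q ⊆ s)) (w := hjlen)
    rw [Finset.mem_biUnion]
    refine ⟨_, Finset.mem_range.mpr hj, Finset.mem_filter.mpr ⟨hsF, ?_⟩⟩
    rw [List.getD_eq_getElem Q ∅ hjlen]
    exact of_decide_eq_true hp
  calc (F.filter (fun s => tau 5 Q s ≤ m)).card
      ≤ ((Finset.range m).biUnion (fun i => F.filter (fun s => Q.getD i ∅ ⊆ s))).card :=
        Finset.card_le_card hsub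
    _ ≤ ∑ i ∈ Finset.range m, (F.filter (fun s => Q.getD i ∅ ⊆ s)).card :=
        Finset.card_biUnion_le
    _ ≤ ∑ i ∈ Finset.range m, b := Finset.sum_le_sum fun i hi =>
        hb i (lt_of_lt_of_le (Finset.mem_range.mp hi) hm)
    _ = b * m := by rw [Finset.sum_const, Finset.card_range, smul_eq_mul, mul_comm]

lemma sum_tau_ge (Q : List (Finset (Fin 5))) (hlen : Q.length = 10)
    (F : Finset (Finset (Fin 5))) (b : ℕ)
    (hb : ∀ i < 10, (F.filter (fun s => Q.getD i ∅ ⊆ s)).card ≤ b) :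
    ∑ m ∈ Finset.range 11, (F.card - b * m) ≤ ∑ s ∈ F, tau 5 Q s := by
  have htle : ∀ s ∈ F, tau 5 Q s ≤ 11 := by
    intro s _
    have := List.findIdx_le_length (p := fun q => decide (q ⊆ s)) (xs := Q)
    unfold tau; omega
  rw [layer_cake F _ 11 htle]
  refine Finset.sum_le_sum fun m hm => ?_
  have hm10 : m ≤ 10 := by have := Finset.mem_range.mp hm; omega
  have h1 := count_bound Q hlen F b hb m hm10
  have h2 := Finset.card_filter_add_card_filter_not
    (s := F) (p := fun s => tau 5 Q s ≤ m)
  have h3 : F.filter (fun s => ¬ tau 5 Q s ≤ m) = F.filter (fun s => m < tau 5 Q s) := by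
    apply Finset.filter_congr; intro s _; simp [not_le]
  rw [h3] at h2
  omega

lemma q_mem (Q : List (Finset (Fin 5))) (hQ : CompleteSeq 5 3 Q) (hlen : Q.length = 10)
    (i : ℕ) (hi : i < 10) : (Q.getD i ∅).card = 3 := by
  have h : Q.getD i ∅ ∈ Q := by
    rw [List.getD_eq_getElem Q ∅ (by omega)]
    exact List.getElem_mem _
  exact (hQ.2 _).mp h

lemma hb3 (Q : List (Finset (Fin 5))) (hQ : CompleteSeq 5 3 Q) (hlen : Q.length = 10)
    (i : ℕ) (hi : i < 10) :
    ((Finset.univ.filter (fun s : Finset (Fin 5) => s.card = 3)).filter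
      (fun s => Q.getD i ∅ ⊆ s)).card ≤ 1 := by
  set q := Q.getD i ∅ with hq
  have hcard : q.card = 3 := q_mem Q hQ hlen i hi
  apply Finset.card_le_one.mpr
  intro a ha b hb
  simp only [Finset.mem_filter, Finset.mem_univ, true_and] at ha hb
  have h1 : q = a := Finset.eq_of_subset_of_card_le ha.2 (by omega)
  have h2 : q = b := Finset.eq_of_subset_of_card_le hb.2 (by omega)
  rw [← h1, ← h2]

lemma hb4 (Q : List (Finset (Fin 5))) (hQ : CompleteSeq 5 3 Q) (hlen : Q.length = 10)
    (i : ℕ) (hi : i < 10) :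
    ((Finset.univ.filter (fun s : Finset (Fin 5) => s.card = 4)).filter
      (fun s => Q.getD i ∅ ⊆ s)).card ≤ 2 := by
  set q := Q.getD i ∅ with hq
  have hcard : q.card = 3 := q_mem Q hQ hlen i hi
  have hmap : ((Finset.univ.filter (fun s : Finset (Fin 5) => s.card = 4)).filter
      (fun s => q ⊆ s)) ⊆ qᶜ.image (fun x => insert x q) := by
    intro s hs
    simp only [Finset.mem_filter, Finset.mem_univ, true_and] at hs
    obtain ⟨h4, hsub⟩ := hs
    have hdc : (s \ q).card = 1 := by rw [Finset.card_sdiff_of_subset hsub]; omega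
    obtain ⟨x, hx⟩ := Finset.card_eq_one.mp hdc
    have hxs : x ∈ s \ q := by rw [hx]; exact Finset.mem_singleton_self x
    rw [Finset.mem_sdiff] at hxs
    refine Finset.mem_image.mpr ⟨x, Finset.mem_compl.mpr hxs.2, ?_⟩
    have : q ∪ (s \ q) = s := Finset.union_sdiff_of_subset hsub
    rw [hx] at this
    rw [← this, Finset.insert_eq, Finset.union_comm]
  calc _ ≤ (qᶜ.image (fun x => insert x q)).card := Finset.card_le_card hmap
    _ ≤ qᶜ.card := Finset.card_image_le
    _ = 2 := by rw [Finset.card_compl, hcard]; rfl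

lemma sum_lb (Q : List (Finset (Fin 5))) (hQ : CompleteSeq 5 3 Q) :
    65 ≤ ∑ s ∈ scenes 5 3, tau 5 Q s := by
  have hlen : Q.length = 10 := by
    have h1 : Q.toFinset = Finset.univ.filter (fun s : Finset (Fin 5) => s.card = 3) := by
      ext q
      simp [List.mem_toFinset, hQ.2 q]
    have h2 := List.toFinset_card_of_nodup hQ.1
    rw [h1] at h2
    rw [← h2]; decide
  set F3 := Finset.univ.filter (fun s : Finset (Fin 5) => s.card = 3) with hF3
  set F4 := Finset.univ.filter (fun s : Finset (Fin 5) => s.card = 4) with hF4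
  have hsplit : scenes 5 3 = (F3 ∪ F4) ∪ {Finset.univ} := by decide
  have hd1 : Disjoint F3 F4 := by decide
  have hd2 : Disjoint (F3 ∪ F4) ({Finset.univ} : Finset (Finset (Fin 5))) := by decide
  rw [hsplit, Finset.sum_union hd2, Finset.sum_union hd1]
  have hB3 : ∑ m ∈ Finset.range 11, (F3.card - 1 * m) ≤ ∑ s ∈ F3, tau 5 Q s :=
    sum_tau_ge Q hlen F3 1 (hb3 Q hQ hlen)
  have hB4 : ∑ m ∈ Finset.range 11, (F4.card - 2 * m) ≤ ∑ s ∈ F4, tau 5 Q s :=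
    sum_tau_ge Q hlen F4 2 (hb4 Q hQ hlen)
  have e3 : ∑ m ∈ Finset.range 11, (F3.card - 1 * m) = 55 := by decide
  have e4 : ∑ m ∈ Finset.range 11, (F4.card - 2 * m) = 9 := by decide
  have huniv : 1 ≤ ∑ s ∈ ({Finset.univ} : Finset (Finset (Fin 5))), tau 5 Q s := by
    rw [Finset.sum_singleton]; unfold tau; omega
  omega


/-- For `n = 5`, `k = 3`, the minimum of `T` over all complete sequences is
`65/16`, attained by the sequence obtained from the pattern shifting sequence
by swapping its second and tenth queries. -/
theorem min_T_eq :
    CompleteSeq 5 3 swappedQ ∧ T 5 3 swappedQ = 65 / 16 ∧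
    ∀ Q : List (Finset (Fin 5)), CompleteSeq 5 3 Q → 65 / 16 ≤ T 5 3 Q := by
  refine ⟨by constructor <;> decide, ?_, ?_⟩
  · have h : ∑ s ∈ scenes 5 3, tau 5 swappedQ s = 65 := by decide
    have hc : (scenes 5 3).card = 16 := by decide
    unfold T
    rw [hc, ← Nat.cast_sum, h]
    norm_num
  · intro Q hQ
    have h := sum_lb Q hQ
    have hc : (scenes 5 3).card = 16 := by decide
    unfold T
    rw [hc, ← Nat.cast_sum]
    rw [div_le_iff₀ (by norm_num)]
    have : (65 : ℚ) ≤ ((∑ s ∈ scenes 5 3, tau 5 Q s : ℕ) : ℚ) := by exact_mod_cast h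
    linarith
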